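/- Let d = pq with p, q positive integers (not necessarily prime). For every m ∈ ℤ_p and s ∈ ℤ_q, the vector ψ_{ms} := (1/√q) ∑_{k∈ℤ_q} ω_q^{sk} a_{kp+m} equals (1/√p) ω_d^{−ms} ∑_{l∈ℤ_p} ω_p^{−ml} b_{lq+s}, where b_j = (1/√d) ∑_{i∈ℤ_d} ω_d^{ij} a_i. -/

import Mathlib

open Complex Matrix
open scoped ComplexOrder

noncomputable section

/-- `omega n = exp(2 π i / n)`, a primitive `n`-th root of unity. -/
def omega (n : ℕ) : ℂ := Complex.exp (2 * Real.pi * Complex.I / n)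

/-- The standard basis vector `a i` of `ℂ^d`. -/
def stdVec (d : ℕ) (i : Fin d) : Fin d → ℂ := fun k => if k = i then 1 else 0

/-- The Fourier (DFT) basis vector `b j = (1/√d) ∑ i, ω_d^(i j) • a i`. -/
def fourierVec (d : ℕ) (j : Fin d) : Fin d → ℂ :=
  fun i => ((1 / Real.sqrt d : ℝ) : ℂ) * omega d ^ (i.val * j.val)

/-- The rank-one projector `|v⟩⟨v|` of a vector `v`, as a matrix. -/
def proj (d : ℕ) (v : Fin d → ℂ) : Matrix (Fin d) (Fin d) ℂ :=
  Matrix.of fun i k => v i * (starRingEnd ℂ) (v k)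

/-- The Kirkwood-Dirac quasiprobability `Q i j F = ⟨b j|a i⟩ * ⟨a i|F|b j⟩`. -/
def KDQ (d : ℕ) (F : Matrix (Fin d) (Fin d) ℂ) (i j : Fin d) : ℂ :=
  (starRingEnd ℂ) (fourierVec d j i) * ∑ k, F i k * fourierVec d j k

/-- The set `KD⁺` of KD classical density matrices: positive semidefinite, trace one,
and all KD quasiprobabilities are nonnegative reals. -/
def KDplus (d : ℕ) : Set (Matrix (Fin d) (Fin d) ℂ) :=
  {ρ | ρ.PosSemidef ∧ ρ.trace = 1 ∧
    ∀ i j, (KDQ d ρ i j).im = 0 ∧ 0 ≤ (KDQ d ρ i j).re}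

/-- The set `KD^r` of self-adjoint operators whose KD distribution is everywhere real. -/
def KDr (d : ℕ) : Set (Matrix (Fin d) (Fin d) ℂ) :=
  {F | F.IsHermitian ∧ ∀ i j, (KDQ d F i j).im = 0}

/-- `A = {|a i⟩⟨a i| : i ∈ ℤ_d}`. -/
def setA (d : ℕ) : Set (Matrix (Fin d) (Fin d) ℂ) :=
  {M | ∃ i : Fin d, M = proj d (stdVec d i)}

/-- `B = {|b j⟩⟨b j| : j ∈ ℤ_d}`. -/
def setB (d : ℕ) : Set (Matrix (Fin d) (Fin d) ℂ) :=
  {M | ∃ j : Fin d, M = proj d (fourierVec d j)}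

/-- For `d = p * q` : `ψ m s = (1/√q) ∑ k ∈ ℤ_q, ω_q^(s k) • a (k p + m)`
(so the `i`-th coordinate is nonzero iff `i ≡ m [MOD p]`, with `k = i / p`). -/
def psiPQ (d p q : ℕ) (m : Fin p) (s : Fin q) : Fin d → ℂ :=
  fun i => if i.val % p = m.val then
    ((1 / Real.sqrt q : ℝ) : ℂ) * omega q ^ (s.val * (i.val / p)) else 0

/-- For `d = p * q` : `φ m' s' = (1/√p) ∑ k ∈ ℤ_p, ω_p^(s' k) • a (k q + m')`. -/
def phiPQ (d p q : ℕ) (m' : Fin q) (s' : Fin p) : Fin d → ℂ :=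
  fun i => if i.val % q = m'.val then
    ((1 / Real.sqrt p : ℝ) : ℂ) * omega p ^ (s'.val * (i.val / q)) else 0

/-- For `d = p ^ 2` : `C = {|ψ m s⟩⟨ψ m s| : m, s ∈ ℤ_p}`. -/
def setC2 (d p : ℕ) : Set (Matrix (Fin d) (Fin d) ℂ) :=
  {M | ∃ m s : Fin p, M = proj d (psiPQ d p p m s)}

/-- For `d = p * q` : `C = {|ψ m s⟩⟨ψ m s| : m ∈ ℤ_p, s ∈ ℤ_q}`. -/
def setC (d p q : ℕ) : Set (Matrix (Fin d) (Fin d) ℂ) :=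
  {M | ∃ (m : Fin p) (s : Fin q), M = proj d (psiPQ d p q m s)}

/-- For `d = p * q` : `D = {|φ m' s'⟩⟨φ m' s'| : m' ∈ ℤ_q, s' ∈ ℤ_p}`. -/
def setD (d p q : ℕ) : Set (Matrix (Fin d) (Fin d) ℂ) :=
  {M | ∃ (m' : Fin q) (s' : Fin p), M = proj d (phiPQ d p q m' s')}

/-- Matrix entries in the Fourier basis: `⟨b k|G|b j⟩`. -/
def entryB (d : ℕ) (G : Matrix (Fin d) (Fin d) ℂ) (k j : Fin d) : ℂ :=
  ∑ i, ∑ l, (starRingEnd ℂ) (fourierVec d k i) * G i l * fourierVec d j l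

/-- For `d = pq` (`p, q` positive integers), for every `m ∈ ℤ_p`,
`s ∈ ℤ_q`, `ψ_{ms} = (1/√p) ω_d^{−ms} ∑_{l ∈ ℤ_p} ω_p^{−ml} b_{lq+s}`. -/
lemma omega_ne_zero (n : ℕ) : omega n ≠ 0 := Complex.exp_ne_zero _

lemma omega_pow_self {n : ℕ} (hn : 0 < n) : omega n ^ n = 1 := by
  have hn' : (n : ℂ) ≠ 0 := Nat.cast_ne_zero.mpr hn.ne'
  rw [omega, ← Complex.exp_nat_mul]
  rw [show (n : ℂ) * (2 * Real.pi * Complex.I / n) = 2 * Real.pi * Complex.I by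
    field_simp]
  exact Complex.exp_two_pi_mul_I

lemma omega_mul_pow_right {p q : ℕ} (hp : 0 < p) (hq : 0 < q) :
    omega (p * q) ^ q = omega p := by
  have hp' : (p : ℂ) ≠ 0 := Nat.cast_ne_zero.mpr hp.ne'
  have hq' : (q : ℂ) ≠ 0 := Nat.cast_ne_zero.mpr hq.ne'
  rw [omega, omega, ← Complex.exp_nat_mul]
  congr 1
  push_cast
  field_simp

lemma omega_mul_pow_left {p q : ℕ} (hp : 0 < p) (hq : 0 < q) :
    omega (p * q) ^ p = omega q := by
  rw [mul_comm p q]; exact omega_mul_pow_right hq hp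

lemma zpow_eq_of_dvd_sub {ζ : ℂ} (hζ : ζ ≠ 0) {n : ℕ} (h1 : ζ ^ n = 1)
    {a b : ℤ} (h : (n : ℤ) ∣ (a - b)) : ζ ^ a = ζ ^ b := by
  obtain ⟨k, hk⟩ := h
  have ha : a = b + n * k := by linarith
  rw [ha, zpow_add₀ hζ, _root_.zpow_mul, zpow_natCast, h1, _root_.one_zpow, mul_one]

theorem stmt13 (p q d : ℕ) (hp : 0 < p) (hq : 0 < q) (hd : d = p * q)
    (m : Fin p) (s : Fin q) :
    psiPQ d p q m s = fun i =>
      ((1 / Real.sqrt p : ℝ) : ℂ) * omega d ^ (-(m.val * s.val : ℤ)) *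
        ∑ l : Fin p, omega p ^ (-(m.val * l.val : ℤ)) *
          fourierVec d ⟨(l.val * q + s.val) % d, Nat.mod_lt _ (by rw [hd]; exact Nat.mul_pos hp hq)⟩ i := by
  subst hd
  have hpq : 0 < p * q := Nat.mul_pos hp hq
  have hζd : omega (p * q) ≠ 0 := omega_ne_zero _
  have hζp : omega p ≠ 0 := omega_ne_zero _
  have hωd1 : omega (p * q) ^ (p * q) = 1 := omega_pow_self hpq
  have hωp1 : omega p ^ p = 1 := omega_pow_self hp
  funext i
  set x : ℂ := omega p ^ ((i.val : ℤ) - m.val) with hxdef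
  -- rewrite each summand
  have hsummand : ∀ l : Fin p,
      omega p ^ (-(m.val * l.val : ℤ)) *
        fourierVec (p*q) ⟨(l.val * q + s.val) % (p*q), Nat.mod_lt _ hpq⟩ i
      = (((1 / Real.sqrt (p*q) : ℝ) : ℂ) * omega (p*q) ^ ((i.val * s.val : ℤ))) * x ^ l.val := by
    intro l
    simp only [fourierVec]
    rw [← zpow_natCast (omega (p*q)) (i.val * ((l.val * q + s.val) % (p*q)))]
    have e1 : omega (p*q) ^ ((i.val * ((l.val * q + s.val) % (p*q)) : ℕ) : ℤ)
        = omega (p*q) ^ ((i.val * (l.val * q + s.val) : ℕ) : ℤ) := by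
      apply zpow_eq_of_dvd_sub hζd hωd1
      refine ⟨-(i.val * ((l.val * q + s.val) / (p*q))), ?_⟩
      have h := Nat.mod_add_div (l.val * q + s.val) (p*q)
      have h' : ((l.val * q + s.val) % (p*q) : ℤ) + (p*q : ℤ) * ((l.val * q + s.val) / (p*q) : ℕ) = ((l.val * q + s.val : ℕ) : ℤ) := by
        exact_mod_cast congrArg (Nat.cast : ℕ → ℤ) h
      push_cast
      push_cast at h'
      nlinarith [h']
    rw [e1]
    have e2 : omega (p*q) ^ ((i.val * (l.val * q + s.val) : ℕ) : ℤ)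
        = omega p ^ ((i.val * l.val : ℤ)) * omega (p*q) ^ ((i.val * s.val : ℤ)) := by
      have : ((i.val * (l.val * q + s.val) : ℕ) : ℤ) = (q : ℤ) * (i.val * l.val) + i.val * s.val := by
        push_cast; ring
      rw [this, zpow_add₀ hζd, _root_.zpow_mul, zpow_natCast, omega_mul_pow_right hp hq]
    rw [e2]
    have e3 : omega p ^ (-(m.val * l.val : ℤ)) * omega p ^ ((i.val * l.val : ℤ))
        = x ^ l.val := by
      rw [hxdef, ← zpow_natCast (omega p ^ ((i.val : ℤ) - m.val)) l.val, ← _root_.zpow_mul,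
        ← zpow_add₀ hζp]
      congr 1
      ring
    rw [← e3]
    push_cast
    ring
  rw [show (∑ l : Fin p, omega p ^ (-(m.val * l.val : ℤ)) *
      fourierVec (p*q) ⟨(l.val * q + s.val) % (p*q), Nat.mod_lt _ hpq⟩ i)
    = (((1 / Real.sqrt (p*q) : ℝ) : ℂ) * omega (p*q) ^ ((i.val * s.val : ℤ))) *
        ∑ l : Fin p, x ^ l.val by
    rw [Finset.mul_sum]; exact Finset.sum_congr rfl fun l _ => hsummand l]
  rw [Fin.sum_univ_eq_sum_range (fun n => x ^ n) p]
  by_cases hcase : i.val % p = m.val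
  · -- main case
    set k := i.val / p with hkdef
    have hik : (i.val : ℤ) - m.val = p * k := by
      have := Nat.mod_add_div i.val p
      rw [hcase] at this
      push_cast [hkdef]
      have : (m.val : ℤ) + p * (i.val / p : ℕ) = i.val := by exact_mod_cast this
      linarith
    have hx1 : x = 1 := by
      have hone : omega p ^ ((p : ℕ) : ℤ) = 1 := by rw [zpow_natCast, hωp1]
      rw [hxdef, hik, _root_.zpow_mul, hone, _root_.one_zpow]
    rw [hx1]
    simp only [one_pow, Finset.sum_const, Finset.card_range, nsmul_eq_mul, mul_one]
    -- phases
    have hphase : omega (p*q) ^ (-(m.val * s.val : ℤ)) * omega (p*q) ^ ((i.val * s.val : ℤ))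
        = omega q ^ (s.val * k) := by
      rw [← zpow_add₀ hζd]
      have : -(m.val * s.val : ℤ) + (i.val * s.val : ℤ) = (p : ℤ) * (k * s.val) := by
        have : ((i.val : ℤ) - m.val) * s.val = (p : ℤ) * k * s.val := by rw [hik]
        linarith [this]
      rw [this, _root_.zpow_mul, zpow_natCast, omega_mul_pow_left hp hq]
      rw [show ((k : ℤ) * s.val) = ((s.val * k : ℕ) : ℤ) by push_cast; ring, zpow_natCast]
    have hconst : (1 / Real.sqrt p : ℝ) * (1 / Real.sqrt (p*q)) * p = 1 / Real.sqrt q := by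
      rw [Real.sqrt_mul (by positivity) q]
      have h1 : Real.sqrt p ≠ 0 := by positivity
      have h2 : Real.sqrt q ≠ 0 := by positivity
      have hpp : Real.sqrt p * Real.sqrt p = p := Real.mul_self_sqrt (by positivity)
      field_simp
      linear_combination -hpp
    simp only [psiPQ, hcase, if_pos rfl, ← hkdef]
    calc ((1 / Real.sqrt q : ℝ) : ℂ) * omega q ^ (s.val * k)
        = (((1 / Real.sqrt p : ℝ) * (1 / Real.sqrt (p*q)) * p : ℝ) : ℂ) * omega q ^ (s.val * k) := by
          rw [hconst]
      _ = _ := by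
          push_cast
          rw [← hphase]
          ring
  · -- off case
    have hxp : x ^ p = 1 := by
      rw [hxdef, ← zpow_natCast (omega p ^ ((i.val : ℤ) - m.val)) p, ← _root_.zpow_mul,
        mul_comm, _root_.zpow_mul, zpow_natCast, hωp1, _root_.one_zpow]
    have hxne : x ≠ 1 := by
      intro hx1
      have hprim : IsPrimitiveRoot (omega p) p := by
        rw [omega]; exact Complex.isPrimitiveRoot_exp p hp.ne'
      have hdvd : (p : ℤ) ∣ ((i.val : ℤ) - m.val) :=
        (hprim.zpow_eq_one_iff_dvd _).mp (hxdef ▸ hx1)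
      have hmod : (i.val : ℤ) % p = (m.val : ℤ) % p := by
        obtain ⟨c, hc⟩ := hdvd
        have : (i.val : ℤ) = m.val + p * c := by linarith
        rw [this, Int.add_mul_emod_self_left]
      have : i.val % p = m.val % p := by
        have := hmod
        rw [← Int.natCast_mod, ← Int.natCast_mod] at this
        exact_mod_cast this
      rw [Nat.mod_eq_of_lt m.isLt] at this
      exact hcase this
    rw [geom_sum_eq hxne, hxp, sub_self, zero_div, mul_zero, mul_zero]
    simp [psiPQ, hcase]
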